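/- Let x = (x_i) ∈ ℓ¹ with ‖x‖₁ = 1, x₁ ≠ 0, and |x₁| > 1/3. Let P be the projection on ℓ¹ defined by P(y) = (y₁/x₁)·x. Then ‖Id − P‖ < 2. In fact ‖Id − P‖ ≤ 1 + |2 − 1/|x₁||. -/

import Mathlib

set_option maxHeartbeats 1000000
lemma l1_norm_eq (z : lp (fun _ : ℕ => ℝ) 1) : ‖z‖ = ∑' i, |z i| := by
  have := lp.norm_eq_tsum_rpow (p := 1) (by norm_num) z
  simpa using this

lemma l1_summable (z : lp (fun _ : ℕ => ℝ) 1) : Summable fun i => |z i| := by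
  have := (lp.memℓp z).summable (p := 1) (by norm_num)
  simpa using this

-- key: ‖y - (y 0 / x 0) • x‖ ≤ ‖y‖ + |y 0| * (1/|x 0| - 2)
lemma key (x y : lp (fun _ : ℕ => ℝ) 1) (hx : ‖x‖ = 1) (hx0 : x 0 ≠ 0) :
    ‖y - (y 0 / x 0) • x‖ ≤ ‖y‖ + |y 0| * (1 / |x 0| - 2) := by
  set c := y 0 / x 0 with hc
  have hcoe : ∀ i, (↑(y - c • x) : ℕ → ℝ) i = y i - c * x i := by
    intro i; simp [lp.coeFn_sub, lp.coeFn_smul]; rfl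
  have hf : Summable fun i => |y i - c * x i| := by
    have := l1_summable (y - c • x); simpa [hcoe] using this
  have hg : Summable fun i => |y i| + |c| * |x i| := by
    exact (l1_summable y).add ((l1_summable x).mul_left _)
  have hnorm : ‖y - c • x‖ = ∑' i, |y i - c * x i| := by
    rw [l1_norm_eq]; exact tsum_congr fun i => by rw [hcoe]
  have h0 : |y 0 - c * x 0| = 0 := by
    rw [hc, div_mul_cancel₀ _ hx0]; simp
  have hle : ∀ i, |y i - c * x i| ≤ |y i| + |c| * |x i| := fun i => by
    calc |y i - c * x i| ≤ |y i| + |c * x i| := abs_sub _ _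
    _ = |y i| + |c| * |x i| := by rw [abs_mul]
  have step1 : ∑' i, |y i - c * x i| ≤ (∑' i, (|y i| + |c| * |x i|)) - (|y 0| + |c| * |x 0|) := by
    rw [Summable.tsum_eq_zero_add hf, Summable.tsum_eq_zero_add hg, h0, zero_add]
    have : ∑' i : ℕ, |y (i+1) - c * x (i+1)| ≤ ∑' i : ℕ, (|y (i+1)| + |c| * |x (i+1)|) :=
      Summable.tsum_le_tsum (fun i => hle (i+1)) ((summable_nat_add_iff 1).2 hf)
        ((summable_nat_add_iff 1).2 hg)
    linarith
  have hsum : ∑' i, (|y i| + |c| * |x i|) = ‖y‖ + |c| := by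
    rw [Summable.tsum_add (l1_summable y) ((l1_summable x).mul_left _),
      tsum_mul_left, ← l1_norm_eq, ← l1_norm_eq, hx, mul_one]
  have hcval : |c| = |y 0| / |x 0| := by rw [hc, abs_div]
  have hx0' : (0:ℝ) < |x 0| := abs_pos.2 hx0
  rw [hnorm]
  calc ∑' i, |y i - c * x i| ≤ (‖y‖ + |c|) - (|y 0| + |c| * |x 0|) := by
        rw [← hsum]; exact step1
    _ ≤ ‖y‖ + |y 0| * (1 / |x 0| - 2) := by
        rw [hcval, div_mul_cancel₀ _ hx0'.ne']
        rw [div_eq_mul_inv, mul_comm (|y 0|)]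
        ring_nf
        exact le_refl _


/-- If `x ∈ ℓ¹` has norm one, first coordinate `x₀ ≠ 0` with `|x₀| > 1/3`, then
the rank-one projection `P y = (y₀ / x₀) • x` satisfies
`‖Id - P‖ ≤ 1 + |2 - 1/|x₀||` and in particular `‖Id - P‖ < 2`. -/
theorem stmt_3 (x : lp (fun _ : ℕ => ℝ) 1) (hx : ‖x‖ = 1)
    (hx0 : x 0 ≠ 0) (hx0' : (1 : ℝ) / 3 < |x 0|)
    (P : lp (fun _ : ℕ => ℝ) 1 →L[ℝ] lp (fun _ : ℕ => ℝ) 1)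
    (hP : ∀ y : lp (fun _ : ℕ => ℝ) 1, P y = (y 0 / x 0) • x) :
    ‖ContinuousLinearMap.id ℝ (lp (fun _ : ℕ => ℝ) 1) - P‖ ≤ 1 + abs (2 - 1 / |x 0|) ∧
    ‖ContinuousLinearMap.id ℝ (lp (fun _ : ℕ => ℝ) 1) - P‖ < 2 := by
  set a := |x 0| with ha
  have hapos : (0:ℝ) < a := abs_pos.2 hx0
  set M : ℝ := max 1 (1 / a - 1) with hM
  have hM0 : (0:ℝ) ≤ M := le_trans zero_le_one (le_max_left _ _)
  have hmain : ‖ContinuousLinearMap.id ℝ (lp (fun _ : ℕ => ℝ) 1) - P‖ ≤ M := by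
    apply ContinuousLinearMap.opNorm_le_bound _ hM0
    intro y
    have h1 : (ContinuousLinearMap.id ℝ (lp (fun _ : ℕ => ℝ) 1) - P) y
        = y - (y 0 / x 0) • x := by
      rw [ContinuousLinearMap.sub_apply, ContinuousLinearMap.id_apply, hP]
    rw [h1]
    have hk := key x y hx hx0
    have hy0 : |y 0| ≤ ‖y‖ := by
      have := lp.norm_apply_le_norm (E := fun _ : ℕ => ℝ) (p := 1) one_ne_zero y 0
      simpa using this
    have hy0n : (0:ℝ) ≤ |y 0| := abs_nonneg _
    rcases le_or_gt (1 / a) 2 with hcase | hcase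
    · have : ‖y - (y 0 / x 0) • x‖ ≤ ‖y‖ := by nlinarith
      calc ‖y - (y 0 / x 0) • x‖ ≤ ‖y‖ := this
        _ ≤ M * ‖y‖ := by nlinarith [norm_nonneg y, le_max_left (1:ℝ) (1/a - 1)]
    · have : ‖y - (y 0 / x 0) • x‖ ≤ (1 / a - 1) * ‖y‖ := by nlinarith
      calc ‖y - (y 0 / x 0) • x‖ ≤ (1 / a - 1) * ‖y‖ := this
        _ ≤ M * ‖y‖ := by nlinarith [norm_nonneg y, le_max_right (1:ℝ) (1/a - 1)]
  have h3 : 1 / a < 3 := by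
    rw [div_lt_iff₀ hapos]; nlinarith
  constructor
  · refine le_trans hmain ?_
    rcases le_or_gt (1 / a) 2 with hcase | hcase
    · rw [abs_of_nonneg (by linarith)]
      apply max_le <;> linarith
    · rw [abs_of_nonpos (by linarith)]
      apply max_le <;> linarith
  · refine lt_of_le_of_lt hmain ?_
    apply max_lt <;> linarith
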